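/- For every odd integer b ≥ 1, the expected maximum of a uniformly random ±1-step walk of length b starting at 0 satisfies E[X_b] = 2^{−b} · ((b+1)·C(b, ⌊b/2⌋) − 2^{b−1}); equivalently, ∑_{m=0}^{b} m·f(m,b) = (b+1)·C(b, ⌊b/2⌋) − 2^{b−1}. -/

import Mathlib

/-- The value of a ±1 step: `true` is a rightward step (+1), `false` a leftward step (−1). -/
def stepVal (x : Bool) : ℤ := if x then 1 else -1

/-- The position after `k` steps (partial sum `S_k`) of the walk with steps `ε`. -/
def partialSum {b : ℕ} (ε : Fin b → Bool) (k : ℕ) : ℤ :=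
  ∑ i : Fin b, if (i : ℕ) < k then stepVal (ε i) else 0

/-- The maximum attained position `max { S_k : 0 ≤ k ≤ b }` of the walk with steps `ε`,
started at 0. -/
def walkMax {b : ℕ} (ε : Fin b → Bool) : ℤ :=
  (Finset.range (b + 1)).sup' ⟨0, Finset.mem_range.mpr (Nat.succ_pos b)⟩ (partialSum ε)

/-- `f m b` : the number of ±1-step walks of length `b` starting at 0 whose maximum
attained position equals `m`. -/
def f (m : ℤ) (b : ℕ) : ℕ :=
  (Finset.univ.filter (fun ε : Fin b → Bool => walkMax ε = m)).card


lemma stepVal_le (x : Bool) : stepVal x ≤ 1 := by unfold stepVal; split <;> norm_num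

lemma stepVal_not (x : Bool) : stepVal (!x) = - stepVal x := by cases x <;> simp [stepVal]

lemma partialSum_zero {b : ℕ} (ε : Fin b → Bool) : partialSum ε 0 = 0 := by
  simp [partialSum]

lemma partialSum_succ {b : ℕ} (ε : Fin b → Bool) {k : ℕ} (hk : k < b) :
    partialSum ε (k + 1) = partialSum ε k + stepVal (ε ⟨k, hk⟩) := by
  unfold partialSum
  have h : ∀ i : Fin b, (if (i : ℕ) < k + 1 then stepVal (ε i) else 0)
      = (if (i : ℕ) < k then stepVal (ε i) else 0)
        + (if i = ⟨k, hk⟩ then stepVal (ε i) else 0) := by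
    intro i
    by_cases h1 : i = ⟨k, hk⟩
    · subst h1; simp
    · have h2 : (i : ℕ) ≠ k := fun hh => h1 (Fin.ext hh)
      rw [if_neg h1]
      split_ifs <;> omega
  rw [Finset.sum_congr rfl (fun i _ => h i), Finset.sum_add_distrib,
    Finset.sum_ite_eq' Finset.univ (⟨k, hk⟩ : Fin b)]
  simp

lemma partialSum_stable {b : ℕ} (ε : Fin b → Bool) {k : ℕ} (hk : b ≤ k) :
    partialSum ε k = partialSum ε b := by
  unfold partialSum
  refine Finset.sum_congr rfl fun i _ => ?_
  rw [if_pos (lt_of_lt_of_le i.isLt hk), if_pos i.isLt]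

lemma partialSum_le {b : ℕ} (ε : Fin b → Bool) (k : ℕ) : partialSum ε k ≤ b := by
  unfold partialSum
  calc ∑ i : Fin b, (if (i : ℕ) < k then stepVal (ε i) else 0)
      ≤ ∑ _i : Fin b, (1 : ℤ) := by
        refine Finset.sum_le_sum fun i _ => ?_
        split
        · exact stepVal_le _
        · norm_num
    _ = b := by simp

lemma partialSum_succ_le {b : ℕ} (ε : Fin b → Bool) (k : ℕ) :
    partialSum ε (k + 1) ≤ partialSum ε k + 1 := by
  by_cases hk : k < b
  · rw [partialSum_succ ε hk]
    have := stepVal_le (ε ⟨k, hk⟩); omega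
  · rw [partialSum_stable ε (by omega : b ≤ k + 1), partialSum_stable ε (by omega : b ≤ k)]
    omega

lemma exists_hit {b : ℕ} (ε : Fin b → Bool) {m : ℤ} (hm : 0 ≤ m) :
    ∀ K, m ≤ partialSum ε K → ∃ k, partialSum ε k = m := by
  intro K
  induction K with
  | zero =>
    intro h
    exact ⟨0, by have := partialSum_zero ε; omega⟩
  | succ K ih =>
    intro h
    by_cases h2 : m ≤ partialSum ε K
    · exact ih h2
    · have := partialSum_succ_le ε K
      exact ⟨K + 1, by omega⟩

lemma walkMax_nonneg {b : ℕ} (ε : Fin b → Bool) : 0 ≤ walkMax ε := by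
  have h := Finset.le_sup' (partialSum ε) (Finset.mem_range.2 (by omega : 0 < b + 1))
  rwa [partialSum_zero] at h

lemma le_walkMax {b : ℕ} (ε : Fin b → Bool) (k : ℕ) (hk : k ≤ b) :
    partialSum ε k ≤ walkMax ε :=
  Finset.le_sup' (partialSum ε) (Finset.mem_range.2 (by omega))

lemma walkMax_le {b : ℕ} (ε : Fin b → Bool) : walkMax ε ≤ b :=
  Finset.sup'_le _ _ fun k _ => partialSum_le ε k

lemma walkMax_ge_iff {b : ℕ} (ε : Fin b → Bool) {m : ℤ} (hm : 0 ≤ m) :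
    m ≤ walkMax ε ↔ ∃ k, partialSum ε k = m := by
  constructor
  · intro h
    obtain ⟨k, _, h2⟩ := (Finset.le_sup'_iff _).1 h
    exact exists_hit ε hm k h2
  · rintro ⟨k, hk⟩
    rcases le_or_gt k b with h | h
    · exact hk ▸ le_walkMax ε k h
    · have h2 : partialSum ε b = m := by rw [← partialSum_stable ε h.le]; exact hk
      exact h2 ▸ le_walkMax ε b le_rfl

open scoped Classical in
noncomputable def reflect {b : ℕ} (m : ℤ) (ε : Fin b → Bool) : Fin b → Bool :=
  if h : ∃ k, partialSum ε k = m then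
    fun i => if Nat.find h ≤ (i : ℕ) then !(ε i) else ε i
  else ε

lemma reflect_apply {b : ℕ} {m : ℤ} {ε : Fin b → Bool} (h : ∃ k, partialSum ε k = m)
    (i : Fin b) : reflect m ε i = if Nat.find h ≤ (i : ℕ) then !(ε i) else ε i := by
  simp only [reflect, dif_pos h]

lemma reflect_partialSum {b : ℕ} (m : ℤ) (ε : Fin b → Bool)
    (h : ∃ k, partialSum ε k = m) (k : ℕ) :
    partialSum (reflect m ε) k
      = if k ≤ Nat.find h then partialSum ε k else 2 * m - partialSum ε k := by
  have hspec : partialSum ε (Nat.find h) = m := Nat.find_spec h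
  induction k with
  | zero =>
    rw [if_pos (Nat.zero_le _), partialSum_zero, partialSum_zero]
  | succ k ih =>
    by_cases hkb : k < b
    · have h1 : partialSum ε (k + 1) = partialSum ε k + stepVal (ε ⟨k, hkb⟩) :=
        partialSum_succ ε hkb
      have h2 : partialSum (reflect m ε) (k + 1)
          = partialSum (reflect m ε) k + stepVal (reflect m ε ⟨k, hkb⟩) :=
        partialSum_succ (reflect m ε) hkb
      have h3 : stepVal (reflect m ε ⟨k, hkb⟩)
          = if Nat.find h ≤ k then - stepVal (ε ⟨k, hkb⟩) else stepVal (ε ⟨k, hkb⟩) := by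
        rw [reflect_apply h]
        split_ifs <;> simp [stepVal_not]
      by_cases hkτ : k + 1 ≤ Nat.find h
      · rw [if_pos hkτ]
        rw [if_pos (by omega : k ≤ Nat.find h)] at ih
        rw [if_neg (by omega : ¬ Nat.find h ≤ k)] at h3
        omega
      · rw [if_neg hkτ]
        by_cases hk2 : k ≤ Nat.find h
        · have hk3 : k = Nat.find h := by omega
          have hm2 : partialSum ε k = m := by rw [hk3]; exact hspec
          rw [if_pos hk2] at ih
          rw [if_pos (by omega : Nat.find h ≤ k)] at h3
          omega
        · rw [if_neg hk2] at ih
          rw [if_pos (by omega : Nat.find h ≤ k)] at h3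
          omega
    · have hb : b ≤ k := by omega
      have h1 : partialSum ε (k + 1) = partialSum ε k := by
        rw [partialSum_stable ε (by omega : b ≤ k + 1), partialSum_stable ε hb]
      have h2 : partialSum (reflect m ε) (k + 1) = partialSum (reflect m ε) k := by
        rw [partialSum_stable _ (by omega : b ≤ k + 1), partialSum_stable _ hb]
      by_cases hkτ : k + 1 ≤ Nat.find h
      · rw [if_pos hkτ]; rw [if_pos (by omega : k ≤ Nat.find h)] at ih; omega
      · rw [if_neg hkτ]
        by_cases hk2 : k ≤ Nat.find h
        · have hk3 : k = Nat.find h := by omega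
          have hm2 : partialSum ε k = m := by rw [hk3]; exact hspec
          rw [if_pos hk2] at ih; omega
        · rw [if_neg hk2] at ih; omega

lemma reflect_hits {b : ℕ} {m : ℤ} {ε : Fin b → Bool} (h : ∃ k, partialSum ε k = m) :
    ∃ k, partialSum (reflect m ε) k = m := by
  refine ⟨Nat.find h, ?_⟩
  rw [reflect_partialSum m ε h (Nat.find h), if_pos le_rfl]
  exact Nat.find_spec h

lemma reflect_find {b : ℕ} {m : ℤ} {ε : Fin b → Bool} (h : ∃ k, partialSum ε k = m) :
    Nat.find (reflect_hits h) = Nat.find h := by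
  apply le_antisymm
  · refine Nat.find_min' _ ?_
    rw [reflect_partialSum m ε h (Nat.find h), if_pos le_rfl]
    exact Nat.find_spec h
  · by_contra hc
    push_neg at hc
    have hk := Nat.find_spec (reflect_hits h)
    rw [reflect_partialSum m ε h (Nat.find (reflect_hits h)),
      if_pos (by omega : Nat.find (reflect_hits h) ≤ Nat.find h)] at hk
    exact Nat.find_min h hc hk

lemma reflect_reflect {b : ℕ} {m : ℤ} {ε : Fin b → Bool} (h : ∃ k, partialSum ε k = m) :
    reflect m (reflect m ε) = ε := by
  funext i
  rw [reflect_apply (reflect_hits h), reflect_find h, reflect_apply h]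
  split_ifs <;> simp

lemma find_le_b {b : ℕ} {m : ℤ} {ε : Fin b → Bool} (h : ∃ k, partialSum ε k = m) :
    Nat.find h ≤ b := by
  obtain ⟨k, hk⟩ := id h
  rcases le_or_gt k b with hkb | hkb
  · exact le_trans (Nat.find_min' h hk) hkb
  · rw [partialSum_stable ε hkb.le] at hk
    exact Nat.find_min' h hk

lemma reflect_last {b : ℕ} {m : ℤ} {ε : Fin b → Bool} (h : ∃ k, partialSum ε k = m) :
    partialSum (reflect m ε) b = 2 * m - partialSum ε b := by
  have hf := reflect_partialSum m ε h b
  have hτb := find_le_b h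
  by_cases hbτ : b ≤ Nat.find h
  · have he : Nat.find h = b := le_antisymm hτb hbτ
    have hm2 := Nat.find_spec h
    rw [he] at hm2
    rw [if_pos hbτ] at hf
    omega
  · rw [if_neg hbτ] at hf
    exact hf

lemma card_max_ge {b : ℕ} {m : ℤ} (hm : 1 ≤ m) :
    (Finset.univ.filter (fun ε : Fin b → Bool => m ≤ walkMax ε)).card
      = (Finset.univ.filter (fun ε : Fin b → Bool => m ≤ partialSum ε b)).card
        + (Finset.univ.filter (fun ε : Fin b → Bool => m + 1 ≤ partialSum ε b)).card := by
  classical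
  have hsplit := Finset.card_filter_add_card_filter_not
    (s := Finset.univ.filter (fun ε : Fin b → Bool => m ≤ walkMax ε))
    (p := fun ε => m ≤ partialSum ε b)
  rw [Finset.filter_filter, Finset.filter_filter] at hsplit
  have e1 : Finset.univ.filter (fun ε : Fin b → Bool => m ≤ walkMax ε ∧ m ≤ partialSum ε b)
      = Finset.univ.filter (fun ε : Fin b → Bool => m ≤ partialSum ε b) := by
    refine Finset.filter_congr fun ε _ => ?_
    constructor
    · exact fun hh => hh.2
    · exact fun hh => ⟨le_trans hh (le_walkMax ε b le_rfl), hh⟩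
  have e2 : (Finset.univ.filter
        (fun ε : Fin b → Bool => m ≤ walkMax ε ∧ ¬ m ≤ partialSum ε b)).card
      = (Finset.univ.filter (fun ε : Fin b → Bool => m + 1 ≤ partialSum ε b)).card := by
    refine Finset.card_bij' (fun ε _ => reflect m ε) (fun ε _ => reflect m ε) ?_ ?_ ?_ ?_
    · intro ε hε
      rw [Finset.mem_filter] at hε ⊢
      obtain ⟨-, h1, h2⟩ := hε
      have hex : ∃ k, partialSum ε k = m := (walkMax_ge_iff ε (by omega)).1 h1
      refine ⟨Finset.mem_univ _, ?_⟩
      rw [reflect_last hex]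
      omega
    · intro ε hε
      rw [Finset.mem_filter] at hε ⊢
      obtain ⟨-, h1⟩ := hε
      have hex : ∃ k, partialSum ε k = m :=
        exists_hit ε (by omega) b (by omega)
      refine ⟨Finset.mem_univ _, ?_, ?_⟩
      · exact (walkMax_ge_iff _ (by omega)).2 (reflect_hits hex)
      · rw [reflect_last hex]; omega
    · intro ε hε
      rw [Finset.mem_filter] at hε
      exact reflect_reflect ((walkMax_ge_iff ε (by omega)).1 hε.2.1)
    · intro ε hε
      rw [Finset.mem_filter] at hε
      exact reflect_reflect (exists_hit ε (by omega) b (by omega : m ≤ partialSum ε b))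
  rw [e1] at hsplit
  rw [e2] at hsplit
  omega

def trues {b : ℕ} (ε : Fin b → Bool) : ℕ := (Finset.univ.filter (fun i => ε i)).card

lemma trues_le {b : ℕ} (ε : Fin b → Bool) : trues ε ≤ b :=
  le_trans (Finset.card_filter_le _ _) (by simp)

lemma partialSum_last {b : ℕ} (ε : Fin b → Bool) :
    partialSum ε b = 2 * (trues ε : ℤ) - b := by
  unfold partialSum
  have h1 : ∀ i : Fin b, (if (i : ℕ) < b then stepVal (ε i) else 0)
      = 2 * (if ε i then (1 : ℤ) else 0) - 1 := by
    intro i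
    rw [if_pos i.isLt]
    unfold stepVal
    split_ifs <;> ring
  rw [Finset.sum_congr rfl fun i _ => h1 i, Finset.sum_sub_distrib, ← Finset.mul_sum,
    Finset.sum_boole]
  simp [trues]

lemma card_trues_eq {b : ℕ} (j : ℕ) :
    (Finset.univ.filter (fun ε : Fin b → Bool => trues ε = j)).card = b.choose j := by
  classical
  have : (Finset.univ.filter (fun ε : Fin b → Bool => trues ε = j)).card
      = ((Finset.univ : Finset (Fin b)).powersetCard j).card := by
    refine Finset.card_bij' (fun ε _ => Finset.univ.filter (fun i => ε i))
      (fun s _ => fun i => decide (i ∈ s)) ?_ ?_ ?_ ?_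
    · intro ε hε
      rw [Finset.mem_filter] at hε
      exact Finset.mem_powersetCard.2 ⟨Finset.subset_univ _, hε.2⟩
    · intro s hs
      rw [Finset.mem_powersetCard] at hs
      rw [Finset.mem_filter]
      refine ⟨Finset.mem_univ _, ?_⟩
      unfold trues
      rw [show Finset.univ.filter (fun i => (decide (i ∈ s)) = true) = s from by ext i; simp]
      exact hs.2
    · intro ε hε
      funext i
      simp
    · intro s hs
      ext i
      simp
  rw [this, Finset.card_powersetCard]
  simp

lemma sum_trues_fiber {b : ℕ} (F : ℕ → ℤ) :
    ∑ ε : Fin b → Bool, F (trues ε)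
      = ∑ j ∈ Finset.range (b + 1), (b.choose j : ℤ) * F j := by
  classical
  rw [← Finset.sum_fiberwise_of_maps_to (g := trues) (t := Finset.range (b + 1))
    (fun ε _ => Finset.mem_range.2 (by have := trues_le ε; omega)) (fun ε => F (trues ε))]
  refine Finset.sum_congr rfl fun j _ => ?_
  rw [Finset.sum_congr rfl (fun ε hε => by rw [(Finset.mem_filter.1 hε).2]),
    Finset.sum_const, card_trues_eq, nsmul_eq_mul]

lemma layer_cake {α : Type*} [Fintype α] [DecidableEq α] (N : ℕ) (g : α → ℤ)
    (h0 : ∀ a, 0 ≤ g a) (h1 : ∀ a, g a ≤ N) :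
    ∑ a, g a
      = ∑ m ∈ Finset.Icc 1 N, ((Finset.univ.filter (fun a => (m : ℤ) ≤ g a)).card : ℤ) := by
  classical
  have key : ∀ a : α, g a = ∑ m ∈ Finset.Icc (1:ℕ) N, (if (m : ℤ) ≤ g a then (1 : ℤ) else 0) := by
    intro a
    rw [Finset.sum_boole]
    have he : (Finset.Icc (1:ℕ) N).filter (fun m : ℕ => (m : ℤ) ≤ g a)
        = Finset.Icc (1:ℕ) (g a).toNat := by
      ext m
      simp only [Finset.mem_filter, Finset.mem_Icc]
      have := h0 a; have := h1 a
      constructor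
      · rintro ⟨⟨u1, u2⟩, u3⟩; omega
      · rintro ⟨u1, u2⟩; omega
    rw [he, Nat.card_Icc]
    have := h0 a
    omega
  rw [Finset.sum_congr rfl fun a _ => key a, Finset.sum_comm]
  exact Finset.sum_congr rfl fun m _ => Finset.sum_boole _ _

lemma telescope (b : ℕ) : ∀ n : ℕ, 2 * n + 1 ≤ b →
    ∑ k ∈ Finset.range (n + 1), ((b : ℤ) - 2 * k) * (b.choose k : ℤ)
      = ((n : ℤ) + 1) * (b.choose (n + 1) : ℤ) := by
  intro n
  induction n with
  | zero =>
    intro hb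
    simp [Nat.choose_one_right]
  | succ n ih =>
    intro hb
    rw [Finset.sum_range_succ, ih (by omega)]
    have hc := Nat.choose_succ_right_eq b (n + 1)
    have hc' := congrArg (Nat.cast : ℕ → ℤ) hc
    push_cast [Nat.cast_sub (by omega : n + 1 ≤ b)] at hc'
    push_cast
    linear_combination -hc'

lemma sum_max_part (n b : ℕ) (hb : b = 2 * n + 1) :
    ∑ j ∈ Finset.range (b + 1), (b.choose j : ℤ) * max (2 * (j : ℤ) - (b : ℤ)) 0
      = ((n : ℤ) + 1) * (b.choose (n + 1) : ℤ) := by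
  rw [← Finset.sum_range_reflect]
  have h1 : ∀ j ∈ Finset.range (b + 1),
      ((b.choose (b + 1 - 1 - j) : ℤ) * max (2 * ((b + 1 - 1 - j : ℕ) : ℤ) - (b : ℤ)) 0)
        = (b.choose j : ℤ) * max ((b : ℤ) - 2 * j) 0 := by
    intro j hj
    rw [Finset.mem_range] at hj
    have hjb : j ≤ b := by omega
    have e1 : b + 1 - 1 - j = b - j := by omega
    rw [e1, Nat.choose_symm hjb, Nat.cast_sub hjb]
    ring_nf
  rw [Finset.sum_congr rfl h1]
  rw [← Finset.sum_subset (Finset.range_subset_range.2 (by omega : n + 1 ≤ b + 1))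
    (fun j hj hj2 => by
      rw [Finset.mem_range] at hj hj2
      have h2 : max ((b : ℤ) - 2 * j) 0 = 0 := by
        rw [max_eq_right]; subst hb; push_cast; omega
      rw [h2, mul_zero])]
  have h3 : ∀ j ∈ Finset.range (n + 1),
      (b.choose j : ℤ) * max ((b : ℤ) - 2 * j) 0 = ((b : ℤ) - 2 * j) * (b.choose j : ℤ) := by
    intro j hj
    rw [Finset.mem_range] at hj
    rw [max_eq_left (by subst hb; push_cast; omega : (0:ℤ) ≤ (b : ℤ) - 2 * j)]
    ring
  rw [Finset.sum_congr rfl h3]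
  exact telescope b n (by omega)

lemma sum_upper_choose (n b : ℕ) (hb : b = 2 * n + 1) :
    ∑ j ∈ Finset.range (b + 1), (if n + 1 ≤ j then (b.choose j : ℤ) else 0)
      = 2 ^ (2 * n) := by
  have key : ∑ j ∈ Finset.range (b + 1), (if n + 1 ≤ j then (b.choose j) else 0)
      = 2 ^ (2 * n) := by
    have hsum : (∑ j ∈ Finset.range (b + 1), (if n + 1 ≤ j then (b.choose j) else 0))
        + (∑ j ∈ Finset.range (b + 1), (if ¬ n + 1 ≤ j then (b.choose j) else 0))
        = 2 ^ b := by
      rw [← Finset.sum_add_distrib]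
      calc ∑ j ∈ Finset.range (b + 1),
            ((if n + 1 ≤ j then (b.choose j) else 0) + (if ¬ n + 1 ≤ j then (b.choose j) else 0))
          = ∑ j ∈ Finset.range (b + 1), b.choose j := by
            refine Finset.sum_congr rfl fun j _ => ?_
            split_ifs <;> simp
        _ = 2 ^ b := Nat.sum_range_choose b
    have hSA : (∑ j ∈ Finset.range (b + 1), (if n + 1 ≤ j then (b.choose j) else 0))
        = ∑ j ∈ Finset.range (b + 1), (if ¬ n + 1 ≤ j then (b.choose j) else 0) := by
      rw [← Finset.sum_range_reflect]
      refine Finset.sum_congr rfl fun j hj => ?_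
      rw [Finset.mem_range] at hj
      have hjb : j ≤ b := by omega
      have e1 : b + 1 - 1 - j = b - j := by omega
      rw [e1]
      by_cases hc : n + 1 ≤ b - j
      · rw [if_pos hc, if_pos (by omega : ¬ n + 1 ≤ j), Nat.choose_symm hjb]
      · have hc2 : n + 1 ≤ j := by omega
        rw [if_neg hc, if_neg (fun hh => hh hc2)]
    have hpow : 2 ^ b = 2 * 2 ^ (2 * n) := by subst hb; ring
    omega
  exact_mod_cast key

lemma icc_shift (G : ℤ → ℤ) (b : ℕ) :
    ∑ m ∈ Finset.Icc (1:ℕ) b, G ((m:ℤ) + 1)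
      = ∑ m ∈ Finset.Icc (1:ℕ) b, G (m:ℤ) + G ((b:ℤ) + 1) - G 1 := by
  induction b with
  | zero => simp
  | succ b ih =>
    rw [Finset.sum_Icc_succ_top (by omega : 1 ≤ b + 1),
      Finset.sum_Icc_succ_top (by omega : 1 ≤ b + 1), ih]
    push_cast
    ring

lemma sum_walkMax (n b : ℕ) (hb : b = 2 * n + 1) :
    ∑ ε : Fin b → Bool, walkMax ε
      = ((b : ℤ) + 1) * (b.choose (n + 1) : ℤ) - 2 ^ (2 * n) := by
  classical
  set E : ℤ → ℤ := fun x =>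
    ((Finset.univ.filter (fun ε : Fin b → Bool => x ≤ partialSum ε b)).card : ℤ) with hE
  have L1 : ∑ ε : Fin b → Bool, walkMax ε
      = ∑ m ∈ Finset.Icc (1:ℕ) b,
          ((Finset.univ.filter (fun ε : Fin b → Bool => (m:ℤ) ≤ walkMax ε)).card : ℤ) :=
    layer_cake b walkMax (fun ε => walkMax_nonneg ε) (fun ε => walkMax_le ε)
  have L2 : ∀ m ∈ Finset.Icc (1:ℕ) b,
      ((Finset.univ.filter (fun ε : Fin b → Bool => (m:ℤ) ≤ walkMax ε)).card : ℤ)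
        = E (m:ℤ) + E ((m:ℤ) + 1) := by
    intro m hm
    rw [Finset.mem_Icc] at hm
    have hcm := card_max_ge (b := b) (m := (m:ℤ)) (by exact_mod_cast hm.1)
    simp only [hE]
    exact_mod_cast hcm
  have L5 : ∑ ε : Fin b → Bool, max (partialSum ε b) 0 = ∑ m ∈ Finset.Icc (1:ℕ) b, E (m:ℤ) := by
    rw [layer_cake b (fun ε : Fin b → Bool => max (partialSum ε b) 0)
      (fun ε => le_max_right _ _)
      (fun ε => max_le (partialSum_le ε b) (by positivity))]
    refine Finset.sum_congr rfl fun m hm => ?_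
    rw [Finset.mem_Icc] at hm
    simp only [hE]
    have hss : (Finset.univ.filter (fun ε : Fin b → Bool => (m:ℤ) ≤ max (partialSum ε b) 0))
        = Finset.univ.filter (fun ε : Fin b → Bool => (m:ℤ) ≤ partialSum ε b) := by
      refine Finset.filter_congr fun ε _ => ?_
      rw [le_max_iff]
      constructor
      · rintro (h | h)
        · exact h
        · exfalso
          have : (1:ℤ) ≤ (m:ℤ) := by exact_mod_cast hm.1
          omega
      · exact Or.inl
    rw [hss]
  have L6 : ∑ ε : Fin b → Bool, max (partialSum ε b) 0
      = ((n : ℤ) + 1) * (b.choose (n + 1) : ℤ) := by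
    have hpt : ∀ ε : Fin b → Bool,
        max (partialSum ε b) 0 = (fun j : ℕ => max (2 * (j:ℤ) - (b:ℤ)) 0) (trues ε) := by
      intro ε
      simp only
      rw [partialSum_last]
    rw [Finset.sum_congr rfl fun ε _ => hpt ε,
      sum_trues_fiber (fun j : ℕ => max (2 * (j:ℤ) - (b:ℤ)) 0)]
    exact sum_max_part n b hb
  have L4 : E ((b:ℤ) + 1) = 0 := by
    simp only [hE]
    have : (Finset.univ.filter (fun ε : Fin b → Bool => ((b:ℤ) + 1) ≤ partialSum ε b)) = ∅ := by
      rw [Finset.filter_eq_empty_iff]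
      intro ε _
      have := partialSum_le ε b
      omega
    rw [this]
    simp
  have L7 : E 1 = 2 ^ (2 * n) := by
    simp only [hE]
    rw [← Finset.sum_boole (fun ε : Fin b → Bool => (1:ℤ) ≤ partialSum ε b) Finset.univ]
    have h2 : ∀ ε : Fin b → Bool, (if (1:ℤ) ≤ partialSum ε b then (1:ℤ) else 0)
        = (fun j : ℕ => if n + 1 ≤ j then (1:ℤ) else 0) (trues ε) := by
      intro ε
      simp only [partialSum_last]
      by_cases h : n + 1 ≤ trues ε
      · rw [if_pos h, if_pos (by subst hb; push_cast; omega)]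
      · rw [if_neg h, if_neg (by subst hb; push_cast; omega)]
    rw [Finset.sum_congr rfl fun ε _ => h2 ε,
      sum_trues_fiber (fun j : ℕ => if n + 1 ≤ j then (1:ℤ) else 0)]
    rw [← sum_upper_choose n b hb]
    refine Finset.sum_congr rfl fun j _ => ?_
    split_ifs <;> simp
  rw [L1, Finset.sum_congr rfl L2, Finset.sum_add_distrib, icc_shift E b, ← L5, L6, L4, L7]
  have hb1 : (b:ℤ) + 1 = 2 * ((n:ℤ) + 1) := by subst hb; push_cast; ring
  linear_combination (-(b.choose (n+1) : ℤ)) * hb1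

lemma sum_mf (b : ℕ) :
    ∑ m ∈ Finset.range (b + 1), (m : ℤ) * (f m b : ℤ) = ∑ ε : Fin b → Bool, walkMax ε := by
  classical
  rw [← Finset.sum_fiberwise_of_maps_to (g := fun ε : Fin b → Bool => (walkMax ε).toNat)
    (t := Finset.range (b + 1)) (fun ε _ => by
      have h1 := walkMax_le ε
      have h2 := walkMax_nonneg ε
      exact Finset.mem_range.2 (show (walkMax ε).toNat < b + 1 by omega)) (fun ε => walkMax ε)]
  refine Finset.sum_congr rfl fun m hm => Eq.symm ?_
  have hset : Finset.univ.filter (fun ε : Fin b → Bool => (walkMax ε).toNat = m)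
      = Finset.univ.filter (fun ε : Fin b → Bool => walkMax ε = (m:ℤ)) := by
    refine Finset.filter_congr fun ε _ => ?_
    have := walkMax_nonneg ε
    constructor <;> intro h <;> omega
  have e1 : ∑ ε ∈ Finset.univ.filter (fun ε : Fin b → Bool => (walkMax ε).toNat = m), walkMax ε
      = (Finset.univ.filter (fun ε : Fin b → Bool => (walkMax ε).toNat = m)).card • (m:ℤ) := by
    rw [← Finset.sum_const]
    refine Finset.sum_congr rfl fun ε hε => ?_
    rw [Finset.mem_filter] at hε
    have h0 := walkMax_nonneg ε
    have h3 := hε.2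
    omega
  refine e1.trans ?_
  rw [hset]
  unfold f
  rw [nsmul_eq_mul]
  ring


/-- Proposition 3 (odd case): for odd `b ≥ 1`, the expected maximum of a uniformly
random ±1-step walk of length `b` is `2^{−b}·((b+1)·C(b, ⌊b/2⌋) − 2^{b−1})`;
equivalently, `∑_{m=0}^{b} m·f(m,b) = (b+1)·C(b, ⌊b/2⌋) − 2^{b−1}`. -/
theorem expected_max_odd (b : ℕ) (hb : 1 ≤ b) (hbo : Odd b) :
    (∑ m ∈ Finset.range (b + 1), (m : ℚ) * (f m b : ℚ)) / 2 ^ b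
      = (((b : ℚ) + 1) * (Nat.choose b (b / 2) : ℚ) - 2 ^ (b - 1)) / 2 ^ b ∧
    ∑ m ∈ Finset.range (b + 1), (m : ℤ) * (f m b : ℤ)
      = ((b : ℤ) + 1) * (Nat.choose b (b / 2) : ℤ) - 2 ^ (b - 1) := by
  obtain ⟨n, hn⟩ := hbo
  have hb2 : b = 2 * n + 1 := by omega
  have hint : ∑ m ∈ Finset.range (b + 1), (m : ℤ) * (f m b : ℤ)
      = ((b : ℤ) + 1) * (Nat.choose b (b / 2) : ℤ) - 2 ^ (b - 1) := by
    rw [sum_mf b, sum_walkMax n b hb2]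
    have h1 : b / 2 = n := by omega
    have h2 : b.choose (n + 1) = b.choose n := by
      rw [← Nat.choose_symm (by omega : n ≤ b)]
      congr 1
      omega
    have h3 : b - 1 = 2 * n := by omega
    rw [h1, h2, h3]
  refine ⟨?_, hint⟩
  have hq : (∑ m ∈ Finset.range (b + 1), (m : ℚ) * (f m b : ℚ))
      = ((b : ℚ) + 1) * (Nat.choose b (b / 2) : ℚ) - 2 ^ (b - 1) := by
    exact_mod_cast hint
  rw [hq]
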